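/- Let V be a ℚ-algebra and let π₀, π₁, …, π_s be idempotents in V such that πᵢ·πⱼ = 0 whenever i < j. Then there exist mutually orthogonal idempotents p₀, p₁, …, p_s in V (that is, pᵢ·pᵢ = pᵢ for all i, and pᵢ·pⱼ = 0 for all i ≠ j) such that for each i the idempotents πᵢ and pᵢ are equivalent: there exist elements aᵢ, bᵢ ∈ V with aᵢ·bᵢ = pᵢ and bᵢ·aᵢ = πᵢ. -/
import Mathlib

/-- Gram–Schmidt style orthogonalisation of idempotents. -/
noncomputable def orthQ {V : Type*} [Ring V] (ρ : ℕ → V) : ℕ → V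
  | n => (1 - ∑ m ∈ (Finset.range n).attach, orthQ ρ m.1) * ρ n
  termination_by n => n
  decreasing_by exact Finset.mem_range.mp m.2

theorem orthQ_def {V : Type*} [Ring V] (ρ : ℕ → V) (n : ℕ) :
    orthQ ρ n = (1 - ∑ m ∈ Finset.range n, orthQ ρ m) * ρ n := by
  rw [orthQ]
  congr 1
  rw [← Finset.sum_attach (Finset.range n) (fun m => orthQ ρ m)]

theorem orthQ_main {V : Type*} [Ring V] (s : ℕ) (ρ : ℕ → V)
    (hid : ∀ n, n ≤ s → ρ n * ρ n = ρ n)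
    (horth : ∀ n m, n < m → m ≤ s → ρ m * ρ n = 0) :
    (∀ n, n ≤ s → orthQ ρ n * orthQ ρ n = orthQ ρ n) ∧
    (∀ n, n ≤ s → ∀ l, l < n → orthQ ρ n * orthQ ρ l = 0 ∧ orthQ ρ l * orthQ ρ n = 0) ∧
    (∀ n, n ≤ s → orthQ ρ n * ρ n = orthQ ρ n ∧ ρ n * orthQ ρ n = ρ n) := by
  -- key lemma: ρ m * orthQ ρ n = 0 for n < m ≤ s
  have key : ∀ n m, n < m → m ≤ s → ρ m * orthQ ρ n = 0 := by
    intro n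
    induction n using Nat.strong_induction_on with
    | _ n ih =>
      intro m hnm hms
      have h1 : ρ m * ∑ l ∈ Finset.range n, orthQ ρ l = 0 := by
        rw [Finset.mul_sum]
        apply Finset.sum_eq_zero
        intro l hl
        exact ih l (Finset.mem_range.mp hl) m (lt_trans (Finset.mem_range.mp hl) hnm) hms
      rw [orthQ_def, ← mul_assoc, mul_sub, mul_one, h1, sub_zero]
      exact horth n m hnm hms
  have hF : ∀ n, n ≤ s → ρ n * ∑ l ∈ Finset.range n, orthQ ρ l = 0 := by
    intro n hn
    rw [Finset.mul_sum]
    apply Finset.sum_eq_zero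
    intro l hl
    exact key l n (Finset.mem_range.mp hl) hn
  have hba : ∀ n, n ≤ s → ρ n * orthQ ρ n = ρ n := by
    intro n hn
    rw [orthQ_def, ← mul_assoc, mul_sub, mul_one, hF n hn, sub_zero, hid n hn]
  have hidq : ∀ n, n ≤ s → orthQ ρ n * orthQ ρ n = orthQ ρ n := by
    intro n hn
    have h2 : ρ n * ((1 - ∑ l ∈ Finset.range n, orthQ ρ l) * ρ n) = ρ n := by
      rw [← mul_assoc, mul_sub, mul_one, hF n hn, sub_zero, hid n hn]
    rw [orthQ_def ρ n, mul_assoc, h2]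
  refine ⟨hidq, ?_, ?_⟩
  · intro n
    induction n using Nat.strong_induction_on with
    | _ n ih =>
      intro hn l hl
      constructor
      · rw [orthQ_def ρ n, mul_assoc, key l n hl hn, mul_zero]
      · have hql : orthQ ρ l * ∑ m ∈ Finset.range n, orthQ ρ m = orthQ ρ l := by
          rw [Finset.mul_sum, Finset.sum_eq_single l]
          · exact hidq l (le_of_lt (lt_of_lt_of_le hl hn))
          · intro m hm hml
            have hms : m ≤ s := le_of_lt (lt_of_lt_of_le (Finset.mem_range.mp hm) hn)
            rcases lt_or_gt_of_ne hml with h | h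
            · exact (ih l hl (le_of_lt (lt_of_lt_of_le hl hn)) m h).1
            · exact (ih m (Finset.mem_range.mp hm) hms l h).2
          · intro h
            exact absurd (Finset.mem_range.mpr hl) h
        rw [orthQ_def ρ n, ← mul_assoc, mul_sub, mul_one, hql, sub_self, zero_mul]
  · intro n hn
    constructor
    · conv_lhs => rw [orthQ_def ρ n, mul_assoc, hid n hn]
      rw [← orthQ_def]
    · exact hba n hn

/-- Orthonormalisation of a semi-orthogonal family of idempotents (Proposition `GS` of the
paper): if `π₀, …, π_s` are idempotents in a ℚ-algebra with `πᵢ·πⱼ = 0` for `i < j`, then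
there exist mutually orthogonal idempotents `p₀, …, p_s` such that each `pᵢ` is equivalent
to `πᵢ`, i.e. there are `aᵢ, bᵢ` with `aᵢ·bᵢ = pᵢ` and `bᵢ·aᵢ = πᵢ`. -/
theorem stmt_3 {V : Type*} [Ring V] [Algebra ℚ V] (s : ℕ) (π : ℕ → V)
    (hidem : ∀ i, i ≤ s → π i * π i = π i)
    (horth : ∀ i j, i ≤ s → j ≤ s → i < j → π i * π j = 0) :
    ∃ p a b : ℕ → V,
      (∀ i, i ≤ s → p i * p i = p i) ∧
      (∀ i j, i ≤ s → j ≤ s → i ≠ j → p i * p j = 0) ∧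
      (∀ i, i ≤ s → a i * b i = p i ∧ b i * a i = π i) := by
  set ρ : ℕ → V := fun n => π (s - n) with hρ
  have hid : ∀ n, n ≤ s → ρ n * ρ n = ρ n := fun n hn => hidem (s - n) (Nat.sub_le s n)
  have horth' : ∀ n m, n < m → m ≤ s → ρ m * ρ n = 0 := by
    intro n m hnm hms
    exact horth (s - m) (s - n) (Nat.sub_le s m) (Nat.sub_le s n) (by omega)
  obtain ⟨h1, h2, h3⟩ := orthQ_main s ρ hid horth'
  refine ⟨fun i => orthQ ρ (s - i), fun i => orthQ ρ (s - i), π, ?_, ?_, ?_⟩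
  · intro i hi
    exact h1 (s - i) (Nat.sub_le s i)
  · intro i j hi hj hij
    have hne : s - i ≠ s - j := by omega
    rcases lt_or_gt_of_ne hne with h | h
    · exact (h2 (s - j) (Nat.sub_le s j) (s - i) h).2
    · exact (h2 (s - i) (Nat.sub_le s i) (s - j) h).1
  · intro i hi
    have hsi : s - (s - i) = i := Nat.sub_sub_self hi
    have := h3 (s - i) (Nat.sub_le s i)
    rw [hρ] at this
    simp only [hsi] at this
    exact this
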